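/- A morphism f : M → N of R-modules is an α-isomorphism if and only if the induced map id_m ⊗ f : m ⊗_R M → m ⊗_R N is an isomorphism of R-modules. -/

import Mathlib

set_option synthInstance.maxHeartbeats 800000
set_option maxHeartbeats 1600000


open scoped TensorProduct

namespace Statement1Aux

/-- The index type: positive elements of `Λ`. -/
def Idx (Λ : AddSubgroup ℝ) : Type := {ε : ℝ // ε ∈ Λ ∧ 0 < ε}

variable (Λ : AddSubgroup ℝ)

instance : Preorder (Idx Λ) := Preorder.lift fun i => OrderDual.toDual i.1

lemma Idx.le_def {Λ : AddSubgroup ℝ} {i j : Idx Λ} : i ≤ j ↔ j.1 ≤ i.1 := Iff.rfl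

instance : IsDirected (Idx Λ) (· ≤ ·) := by
  constructor
  intro i j
  rcases le_total i.1 j.1 with h | h
  · exact ⟨i, le_refl i, h⟩
  · exact ⟨j, h, le_refl j⟩

noncomputable instance : DecidableEq (Idx Λ) := Classical.decEq _

variable {R : Type*} [CommRing R] (π : ℝ → R)

/-- Divisibility data: for `i ≤ j` (i.e. `j.1 ≤ i.1` as reals), `π j.1` divides `π i.1`. -/
def Hd : Prop := ∀ i j : Idx Λ, i ≤ j → ∃ c : R, π j.1 * c = π i.1

/-- Transition maps of the directed system whose colimit is `m`. -/
noncomputable def trans (hd : Hd Λ π) : ∀ i j : Idx Λ, i ≤ j → (R →ₗ[R] R) :=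
  fun i j h => (hd i j h).choose • (LinearMap.id : R →ₗ[R] R)

lemma trans_spec (hd : Hd Λ π) (i j : Idx Λ) (h : i ≤ j) (r : R) :
    π j.1 * (trans Λ π hd i j h r) = π i.1 * r := by
  have hc := (hd i j h).choose_spec
  show π j.1 * ((hd i j h).choose • (LinearMap.id : R →ₗ[R] R)) r = π i.1 * r
  simp only [LinearMap.smul_apply, LinearMap.id_coe, id_eq, smul_eq_mul]
  rw [← mul_assoc, hc]

/-- The key "flatness" lemma: if `π ε ⊗ y = 0` in `m ⊗ Q`, then `y` is killed by
some `c` with `π δ * c = π ε` for some positive `δ ≤ ε` in `Λ`. -/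
lemma key {Λ : AddSubgroup ℝ} {R : Type*} [CommRing R] {π : ℝ → R}
    (hπ : ∀ ε : ℝ, ε ∈ Λ → 0 < ε → π ε ∈ nonZeroDivisors R)
    (hd : Hd Λ π)
    (m : Ideal R)
    (hm : ∀ x : R, x ∈ m ↔ ∃ ε : ℝ, ε ∈ Λ ∧ 0 < ε ∧ ∃ r : R, x = π ε * r)
    {Q : Type*} [AddCommGroup Q] [Module R Q]
    (ε : ℝ) (hε : ε ∈ Λ) (h0 : 0 < ε) (hmem : π ε ∈ m)
    (y : Q) (h : (⟨π ε, hmem⟩ : m) ⊗ₜ[R] y = (0 : m ⊗[R] Q)) :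
    ∃ (δ : ℝ) (c : R), δ ∈ Λ ∧ 0 < δ ∧ δ ≤ ε ∧ π δ * c = π ε ∧ c • y = 0 := by
  classical
  haveI : Nonempty (Idx Λ) := ⟨⟨ε, hε, h0⟩⟩
  have cancel : ∀ (σ : ℝ), σ ∈ Λ → 0 < σ → ∀ a b : R, π σ * a = π σ * b → a = b :=
    fun σ h1 h2 a b hab => (mul_cancel_left_mem_nonZeroDivisors (hπ σ h1 h2)).mp hab
  haveI DS : DirectedSystem (fun _ : Idx Λ => R) (fun i j h => trans Λ π hd i j h) := by
    refine ⟨fun k x => ?_, fun k₃ k₂ k₁ h12 h23 x => ?_⟩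
    · exact cancel k.1 k.2.1 k.2.2 _ _ (trans_spec Λ π hd k k le_rfl x)
    · refine cancel k₃.1 k₃.2.1 k₃.2.2 _ _ ?_
      rw [trans_spec Λ π hd k₂ k₃ h23, trans_spec Λ π hd k₁ k₂ h12,
        trans_spec Λ π hd k₁ k₃ (le_trans h12 h23)]
  -- the maps from the stages to m
  have gmem : ∀ k : Idx Λ, π k.1 ∈ m := fun k =>
    (hm _).mpr ⟨k.1, k.2.1, k.2.2, 1, (mul_one _).symm⟩
  have Hg : ∀ (k j : Idx Λ) (hkj : k ≤ j) (x : R),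
      LinearMap.toSpanSingleton R m ⟨π j.1, gmem j⟩ (trans Λ π hd k j hkj x)
        = LinearMap.toSpanSingleton R m ⟨π k.1, gmem k⟩ x := by
    intro k j hkj x
    apply Subtype.ext
    show (trans Λ π hd k j hkj x) * π j.1 = x * π k.1
    rw [mul_comm _ (π j.1), trans_spec Λ π hd k j hkj x, mul_comm]
  set Φ : Module.DirectLimit (fun _ : Idx Λ => R) (trans Λ π hd) →ₗ[R] m :=
    Module.DirectLimit.lift R (Idx Λ) (fun _ : Idx Λ => R) (trans Λ π hd)
      (fun k => LinearMap.toSpanSingleton R m ⟨π k.1, gmem k⟩) Hg with hΦ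
  have Φ_of : ∀ (k : Idx Λ) (r : R),
      Φ (Module.DirectLimit.of R (Idx Λ) (fun _ : Idx Λ => R) (trans Λ π hd) k r)
      = ⟨π k.1 * r, m.mul_mem_right r (gmem k)⟩ := by
    intro k r
    rw [hΦ, Module.DirectLimit.lift_of]
    exact Subtype.ext (mul_comm r (π k.1))
  have Φinj : Function.Injective Φ := by
    rw [injective_iff_map_eq_zero]
    intro z hz
    obtain ⟨k, r, rfl⟩ := Module.DirectLimit.exists_of z
    rw [Φ_of] at hz
    have hval : π k.1 * r = 0 := congrArg Subtype.val hz
    have hr : r = 0 := cancel k.1 k.2.1 k.2.2 r 0 (by rw [hval, mul_zero])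
    rw [hr, map_zero]
  have Φsurj : Function.Surjective Φ := by
    intro x
    obtain ⟨ε', hε', h0', r, hx⟩ := (hm x.1).mp x.2
    exact ⟨Module.DirectLimit.of R (Idx Λ) (fun _ : Idx Λ => R) (trans Λ π hd) ⟨ε', hε', h0'⟩ r,
      (Φ_of ⟨ε', hε', h0'⟩ r).trans (Subtype.ext hx.symm)⟩
  set e2 := TensorProduct.congr (LinearEquiv.ofBijective Φ ⟨Φinj, Φsurj⟩)
    (LinearEquiv.refl R Q) with he2
  have h2 : e2 ((Module.DirectLimit.of R (Idx Λ) (fun _ : Idx Λ => R) (trans Λ π hd)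
        ⟨ε, hε, h0⟩ 1) ⊗ₜ[R] y)
      = (⟨π ε, hmem⟩ : m) ⊗ₜ[R] y := by
    rw [he2, TensorProduct.congr_tmul]
    congr 1
    show Φ _ = _
    exact (Φ_of ⟨ε, hε, h0⟩ 1).trans (Subtype.ext (mul_one _))
  have h3 : (Module.DirectLimit.of R (Idx Λ) (fun _ : Idx Λ => R) (trans Λ π hd)
      ⟨ε, hε, h0⟩ 1) ⊗ₜ[R] y = 0 := by
    apply e2.injective
    rw [h2, h, map_zero]
  -- push through tensor-commutes-with-direct-limits
  have h4 : Module.DirectLimit.of R (Idx Λ) (fun _ : Idx Λ => R ⊗[R] Q)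
      (fun k j h => LinearMap.rTensor Q (trans Λ π hd k j h)) ⟨ε, hε, h0⟩
        ((1 : R) ⊗ₜ[R] y) = 0 := by
    have := congrArg (TensorProduct.toDirectLimit (trans Λ π hd) Q) h3
    rw [map_zero] at this
    rw [← this]
    exact (TensorProduct.toDirectLimit_tmul_of (trans Λ π hd) _ y).symm
  haveI DS2 : DirectedSystem (fun _ : Idx Λ => R ⊗[R] Q)
      (fun k j h => LinearMap.rTensor Q (trans Λ π hd k j h)) := by
    refine ⟨fun k x => ?_, fun k₃ k₂ k₁ h12 h23 x => ?_⟩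
    · have hid : trans Λ π hd k k le_rfl = LinearMap.id :=
        LinearMap.ext fun r => Module.DirectedSystem.map_self (trans Λ π hd) r
      rw [hid, LinearMap.rTensor_id, LinearMap.id_apply]
    · have hcomp : (trans Λ π hd k₂ k₃ h23) ∘ₗ (trans Λ π hd k₁ k₂ h12)
          = trans Λ π hd k₁ k₃ (le_trans h12 h23) :=
        LinearMap.ext fun r => Module.DirectedSystem.map_map (trans Λ π hd) h12 h23 r
      rw [← hcomp, LinearMap.rTensor_comp, LinearMap.comp_apply]
  obtain ⟨j, hij, hz⟩ := Module.DirectLimit.of.zero_exact h4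
  have hz' : (trans Λ π hd ⟨ε, hε, h0⟩ j hij 1) ⊗ₜ[R] y = (0 : R ⊗[R] Q) := by
    rw [← LinearMap.rTensor_tmul]
    exact hz
  have hcy : (trans Λ π hd ⟨ε, hε, h0⟩ j hij 1) • y = 0 := by
    have := congrArg (TensorProduct.lid R Q) hz'
    rwa [TensorProduct.lid_tmul, map_zero] at this
  refine ⟨j.1, trans Λ π hd ⟨ε, hε, h0⟩ j hij 1, j.2.1, j.2.2, hij, ?_, hcy⟩
  have := trans_spec Λ π hd ⟨ε, hε, h0⟩ j hij 1
  rwa [mul_one] at this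

/-- Every element of `m ⊗ Q` is a pure tensor `π ε ⊗ w`. -/
lemma pure_tensor {Λ : AddSubgroup ℝ} (hΛ : Dense (Λ : Set ℝ)) {R : Type*} [CommRing R]
    {π : ℝ → R}
    (m : Ideal R)
    (hm : ∀ x : R, x ∈ m ↔ ∃ ε : ℝ, ε ∈ Λ ∧ 0 < ε ∧ ∃ r : R, x = π ε * r)
    (hmem : ∀ ε : ℝ, ε ∈ Λ → 0 < ε → π ε ∈ m)
    (hdiv : ∀ ε δ : ℝ, ε ∈ Λ → δ ∈ Λ → 0 < δ → δ < ε → ∃ c ∈ m, π δ * c = π ε)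
    {Q : Type*} [AddCommGroup Q] [Module R Q] (t : m ⊗[R] Q) :
    ∃ (ε : ℝ) (hε : ε ∈ Λ) (h0 : 0 < ε) (w : Q),
      t = (⟨π ε, hmem ε hε h0⟩ : m) ⊗ₜ[R] w := by
  induction t with
  | zero =>
    obtain ⟨δ, hδΛ, hδmem⟩ := hΛ.exists_between (zero_lt_one)
    exact ⟨δ, hδΛ, hδmem.1, 0, (TensorProduct.tmul_zero _ _).symm⟩
  | tmul x q =>
    obtain ⟨ε, hε, h0, r, hx⟩ := (hm x.1).mp x.2
    have hxeq : x = r • (⟨π ε, hmem ε hε h0⟩ : m) := by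
      apply Subtype.ext
      show x.1 = r * π ε
      rw [hx, mul_comm]
    refine ⟨ε, hε, h0, r • q, ?_⟩
    rw [hxeq, TensorProduct.smul_tmul]
  | add t₁ t₂ ih₁ ih₂ =>
    obtain ⟨ε₁, hε₁, h₁, w₁, rfl⟩ := ih₁
    obtain ⟨ε₂, hε₂, h₂, w₂, rfl⟩ := ih₂
    obtain ⟨δ, hδΛ, hδmem⟩ := hΛ.exists_between (lt_min h₁ h₂)
    have hδ1 : δ < ε₁ := lt_of_lt_of_le hδmem.2 (min_le_left _ _)
    have hδ2 : δ < ε₂ := lt_of_lt_of_le hδmem.2 (min_le_right _ _)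
    obtain ⟨c₁, _, hc₁⟩ := hdiv ε₁ δ hε₁ hδΛ hδmem.1 hδ1
    obtain ⟨c₂, _, hc₂⟩ := hdiv ε₂ δ hε₂ hδΛ hδmem.1 hδ2
    have he₁ : (⟨π ε₁, hmem ε₁ hε₁ h₁⟩ : m) = c₁ • (⟨π δ, hmem δ hδΛ hδmem.1⟩ : m) :=
      Subtype.ext (by show π ε₁ = c₁ * π δ; rw [mul_comm, hc₁])
    have he₂ : (⟨π ε₂, hmem ε₂ hε₂ h₂⟩ : m) = c₂ • (⟨π δ, hmem δ hδΛ hδmem.1⟩ : m) :=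
      Subtype.ext (by show π ε₂ = c₂ * π δ; rw [mul_comm, hc₂])
    refine ⟨δ, hδΛ, hδmem.1, c₁ • w₁ + c₂ • w₂, ?_⟩
    rw [he₁, he₂, TensorProduct.smul_tmul, TensorProduct.smul_tmul, TensorProduct.tmul_add]

end Statement1Aux

open Statement1Aux

/-- Let `Λ` be a dense additive subgroup of `ℝ`, `R` a commutative ring equipped with
elements `π^ε` (for `ε ∈ Λ`, `ε > 0`) which are non-zero-divisors and satisfy
`π^ε · π^δ = u · π^(ε+δ)` for units `u`, and let `m` be the ideal `⋃ π^ε R`.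
A morphism `f : M → N` of `R`-modules is an α-isomorphism (kernel and cokernel annihilated
by every element of `m`) if and only if `id_m ⊗ f : m ⊗_R M → m ⊗_R N` is an isomorphism. -/
theorem statement1
    (Λ : AddSubgroup ℝ) (hΛ : Dense (Λ : Set ℝ))
    {R : Type*} [CommRing R] (π : ℝ → R)
    (hπ : ∀ ε : ℝ, ε ∈ Λ → 0 < ε → π ε ∈ nonZeroDivisors R)
    (hππ : ∀ ε δ : ℝ, ε ∈ Λ → δ ∈ Λ → 0 < ε → 0 < δ →
      ∃ u : Rˣ, π ε * π δ = (u : R) * π (ε + δ))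
    (m : Ideal R)
    (hm : ∀ x : R, x ∈ m ↔ ∃ ε : ℝ, ε ∈ Λ ∧ 0 < ε ∧ ∃ r : R, x = π ε * r)
    {M N : Type*} [AddCommGroup M] [Module R M] [AddCommGroup N] [Module R N]
    (f : M →ₗ[R] N) :
    ((∀ γ ∈ m, ∀ x ∈ LinearMap.ker f, γ • x = 0) ∧
      (∀ γ ∈ m, ∀ y : N ⧸ LinearMap.range f, γ • y = 0)) ↔
      Function.Bijective (LinearMap.lTensor (↥m) f) := by
  classical
  have hmem : ∀ (ε : ℝ), ε ∈ Λ → 0 < ε → π ε ∈ m :=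
    fun ε hε h0 => (hm _).mpr ⟨ε, hε, h0, 1, (mul_one _).symm⟩
  -- divisibility with quotient in m
  have hdiv : ∀ ε δ : ℝ, ε ∈ Λ → δ ∈ Λ → 0 < δ → δ < ε →
      ∃ c : R, c ∈ m ∧ π δ * c = π ε := by
    intro ε δ hε hδ h0δ hδε
    have hsub : ε - δ ∈ Λ := AddSubgroup.sub_mem Λ hε hδ
    have hpos : 0 < ε - δ := by linarith
    obtain ⟨u, hu⟩ := hππ δ (ε - δ) hδ hsub h0δ hpos
    have hadd : δ + (ε - δ) = ε := by ring
    rw [hadd] at hu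
    refine ⟨π (ε - δ) * (↑u⁻¹ : R), (hm _).mpr ⟨ε - δ, hsub, hpos, (↑u⁻¹ : R), rfl⟩, ?_⟩
    rw [← mul_assoc, hu, mul_comm ((u : R)) (π ε), mul_assoc]
    simp
  -- splitting: any π ε equals π δ * c with c ∈ m, δ smaller
  have hsplit : ∀ ε : ℝ, ε ∈ Λ → 0 < ε →
      ∃ δ c, δ ∈ Λ ∧ 0 < δ ∧ δ < ε ∧ c ∈ m ∧ π δ * c = π ε := by
    intro ε hε h0
    obtain ⟨δ, hδΛ, hδmem⟩ := hΛ.exists_between h0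
    obtain ⟨c, hcm, hc⟩ := hdiv ε δ hε hδΛ hδmem.1 hδmem.2
    exact ⟨δ, c, hδΛ, hδmem.1, hδmem.2, hcm, hc⟩
  -- the divisibility data for the directed system
  have hd : Hd Λ π := by
    intro i j hij
    rcases eq_or_lt_of_le (Idx.le_def.mp hij) with heq | hlt
    · exact ⟨1, by rw [heq, mul_one]⟩
    · obtain ⟨c, _, hc⟩ := hdiv i.1 j.1 i.2.1 j.2.1 j.2.2 hlt
      exact ⟨c, hc⟩
  -- the evaluation maps
  let μM : m ⊗[R] M →ₗ[R] M := TensorProduct.lift ((LinearMap.lsmul R M).comp m.subtype)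
  let μN : m ⊗[R] N →ₗ[R] N := TensorProduct.lift ((LinearMap.lsmul R N).comp m.subtype)
  have μM_tmul : ∀ (x : m) (p : M), μM (x ⊗ₜ[R] p) = x.1 • p := fun x p => rfl
  have μN_tmul : ∀ (x : m) (p : N), μN (x ⊗ₜ[R] p) = x.1 • p := fun x p => rfl
  constructor
  · rintro ⟨hker, hcoker⟩
    constructor
    · -- injectivity
      rw [injective_iff_map_eq_zero]
      intro t ht
      obtain ⟨ε, hε, h0, w, rfl⟩ := pure_tensor hΛ m hm hmem hdiv t
      rw [LinearMap.lTensor_tmul] at ht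
      obtain ⟨δ, c, hδΛ, hδ0, hδε, hπδc, hcy⟩ :=
        key hπ hd m hm ε hε h0 (hmem ε hε h0) (f w) ht
      have hcw : c • w ∈ LinearMap.ker f := by
        rw [LinearMap.mem_ker, map_smul, hcy]
      obtain ⟨δ', c', hδ'Λ, hδ'0, hδ'δ, hc'm, hc'⟩ := hsplit δ hδΛ hδ0
      have he : (⟨π ε, hmem ε hε h0⟩ : m)
          = c • c' • (⟨π δ', hmem δ' hδ'Λ hδ'0⟩ : m) := by
        apply Subtype.ext
        show π ε = c • (c' * π δ')
        rw [smul_eq_mul, mul_comm c', hc', mul_comm, hπδc]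
      rw [he, TensorProduct.smul_tmul, TensorProduct.smul_tmul,
        hker c' hc'm (c • w) hcw, TensorProduct.tmul_zero]
    · -- surjectivity
      intro t
      obtain ⟨ε, hε, h0, n, rfl⟩ := pure_tensor hΛ m hm hmem hdiv t
      obtain ⟨δ, c, hδΛ, hδ0, hδε, hcm, hc⟩ := hsplit ε hε h0
      have hcn : c • n ∈ LinearMap.range f := by
        have := hcoker c hcm (Submodule.Quotient.mk n)
        rw [← Submodule.Quotient.mk_smul, Submodule.Quotient.mk_eq_zero] at this
        exact this
      obtain ⟨v, hv⟩ := hcn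
      refine ⟨(⟨π δ, hmem δ hδΛ hδ0⟩ : m) ⊗ₜ[R] v, ?_⟩
      rw [LinearMap.lTensor_tmul, hv]
      have he : (⟨π ε, hmem ε hε h0⟩ : m) = c • (⟨π δ, hmem δ hδΛ hδ0⟩ : m) :=
        Subtype.ext (by show π ε = c * π δ; rw [mul_comm, hc])
      rw [he, TensorProduct.smul_tmul]
  · intro hbij
    have hcomm : ∀ s : m ⊗[R] M, μN (LinearMap.lTensor (↥m) f s) = f (μM s) := by
      intro s
      induction s with
      | zero => simp
      | tmul x p =>
        rw [LinearMap.lTensor_tmul, μN_tmul, μM_tmul, map_smul]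
      | add s₁ s₂ ih₁ ih₂ =>
        simp [map_add, ih₁, ih₂]
    constructor
    · intro γ hγ x hx
      have h1 : LinearMap.lTensor (↥m) f ((⟨γ, hγ⟩ : m) ⊗ₜ[R] x) = 0 := by
        rw [LinearMap.lTensor_tmul, LinearMap.mem_ker.mp hx, TensorProduct.tmul_zero]
      have h2 : (⟨γ, hγ⟩ : m) ⊗ₜ[R] x = 0 := by
        apply hbij.1
        rw [h1, map_zero]
      have := congrArg μM h2
      rwa [μM_tmul, map_zero] at this
    · intro γ hγ y
      obtain ⟨n, rfl⟩ := Submodule.Quotient.mk_surjective _ y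
      rw [← Submodule.Quotient.mk_smul, Submodule.Quotient.mk_eq_zero]
      obtain ⟨s, hs⟩ := hbij.2 ((⟨γ, hγ⟩ : m) ⊗ₜ[R] n)
      have : γ • n = f (μM s) := by
        rw [← hcomm s, hs, μN_tmul]
      exact ⟨μM s, this.symm⟩
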